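/- Let 𝒢 be a family of connected non-trivial graphs on a common vertex set V. Let P_n be a path graph of order n ≥ 7 with n ≡ 1 (mod 5) or n ≡ 3 (mod 5), let C_n be the cycle graph obtained from P_n by joining its two leaves by an edge, and let B be a simultaneous adjacency basis of {P_n, C_n}. Then for every family ℋ = ℋ₁ ∪ ℋ₂ such that ℋ₁ is composed of path graphs with ℋ₁ ⊆ 𝒢_B(P_n) and P_n ∈ ℋ₁, and ℋ₂ is composed of cycle graphs with ℋ₂ ⊆ 𝒢_B(C_n) and C_n ∈ ℋ₂, it holds that Sd_A(𝒢⊙ℋ) = |V| · (⌊(2n+2)/5⌋ + 1) − 1. -/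

import Mathlib

open SimpleGraph

/-- `S` is a metric generator for `G`: every pair of distinct vertices is
distinguished by some element of `S` via the shortest-path distance. -/
def IsMetricGen {V : Type*} (G : SimpleGraph V) (S : Set V) : Prop :=
  ∀ u v : V, u ≠ v → ∃ s ∈ S, G.dist s u ≠ G.dist s v

/-- `S` is an adjacency generator for `G`. -/
def IsAdjGen {V : Type*} (G : SimpleGraph V) (S : Set V) : Prop :=
  ∀ x y : V, x ∉ S → y ∉ S → x ≠ y → ∃ s ∈ S, Xor' (G.Adj s x) (G.Adj s y)

/-- `S` is a simultaneous metric generator for the family `𝒢`. -/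
def IsSimMetricGen {V : Type*} (𝒢 : Set (SimpleGraph V)) (S : Set V) : Prop :=
  ∀ G ∈ 𝒢, IsMetricGen G S

/-- `S` is a simultaneous adjacency generator for the family `ℋ`. -/
def IsSimAdjGen {V : Type*} (ℋ : Set (SimpleGraph V)) (S : Set V) : Prop :=
  ∀ H ∈ ℋ, IsAdjGen H S

/-- The simultaneous metric dimension of a family of graphs. -/
noncomputable def Sd {V : Type*} (𝒢 : Set (SimpleGraph V)) : ℕ :=
  sInf {n | ∃ S : Set V, S.ncard = n ∧ IsSimMetricGen 𝒢 S}

/-- The simultaneous adjacency dimension of a family of graphs. -/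
noncomputable def SdA {V : Type*} (ℋ : Set (SimpleGraph V)) : ℕ :=
  sInf {n | ∃ S : Set V, S.ncard = n ∧ IsSimAdjGen ℋ S}

/-- The adjacency dimension of a graph. -/
noncomputable def adjDim {V : Type*} (G : SimpleGraph V) : ℕ := SdA {G}

/-- `B` is an adjacency basis of `G`. -/
def IsAdjBasis {V : Type*} (G : SimpleGraph V) (B : Set V) : Prop :=
  IsAdjGen G B ∧ B.ncard = adjDim G

/-- `B` is a simultaneous adjacency basis of the family `ℋ`. -/
def IsSimAdjBasis {V : Type*} (ℋ : Set (SimpleGraph V)) (B : Set V) : Prop :=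
  IsSimAdjGen ℋ B ∧ B.ncard = SdA ℋ

/-- `D` is a dominating set of `G`. -/
def IsDomSet {V : Type*} (G : SimpleGraph V) (D : Set V) : Prop :=
  ∀ v ∉ D, ∃ u ∈ D, G.Adj u v

/-- `D` is a simultaneous dominating set of the family `𝒢`. -/
def IsSimDomSet {V : Type*} (𝒢 : Set (SimpleGraph V)) (D : Set V) : Prop :=
  ∀ G ∈ 𝒢, IsDomSet G D

/-- The simultaneous domination number of a family of graphs. -/
noncomputable def Sgamma {V : Type*} (𝒢 : Set (SimpleGraph V)) : ℕ :=
  sInf {n | ∃ D : Set V, D.ncard = n ∧ IsSimDomSet 𝒢 D}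

/-- The domination number of a graph. -/
noncomputable def domNum {V : Type*} (G : SimpleGraph V) : ℕ := Sgamma {G}

/-- `γ'(G) = min over vertices `v` of `γ(G - v)`. -/
noncomputable def gammaPrime {V : Type*} (G : SimpleGraph V) : ℕ :=
  sInf {n | ∃ v : V, n = domNum (G.induce {v}ᶜ)}

/-- The corona product `G ⊙ H`: one copy of `G` together with a copy of `H`
for each vertex `i` of `G`, joining `i` to every vertex of its copy. -/
def corona {V V' : Type*} (G : SimpleGraph V) (H : SimpleGraph V') :
    SimpleGraph (V ⊕ V × V') where
  Adj x y :=
    match x, y with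
    | Sum.inl i, Sum.inl j => G.Adj i j
    | Sum.inl i, Sum.inr p => i = p.1
    | Sum.inr p, Sum.inl j => p.1 = j
    | Sum.inr p, Sum.inr q => p.1 = q.1 ∧ H.Adj p.2 q.2
  symm := by
    refine ⟨?_⟩
    rintro (i | p) (j | q) h
    · exact G.adj_symm h
    · exact h.symm
    · exact h.symm
    · exact ⟨h.1.symm, H.adj_symm h.2⟩
  loopless := by
    refine ⟨?_⟩
    rintro (i | p) h
    · exact G.loopless.irrefl i h
    · exact H.loopless.irrefl p.2 h.2

/-- The family `{G ⊙ H : G ∈ 𝒢, H ∈ ℋ}` of corona products. -/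
def coronaFam {V V' : Type*} (𝒢 : Set (SimpleGraph V)) (ℋ : Set (SimpleGraph V')) :
    Set (SimpleGraph (V ⊕ V × V')) :=
  {K | ∃ G ∈ 𝒢, ∃ H ∈ ℋ, K = corona G H}

/-- The join `G + H` of two (vertex-disjoint) graphs. -/
def joinG {V₁ V₂ : Type*} (G : SimpleGraph V₁) (H : SimpleGraph V₂) :
    SimpleGraph (V₁ ⊕ V₂) where
  Adj x y :=
    match x, y with
    | Sum.inl a, Sum.inl b => G.Adj a b
    | Sum.inl _, Sum.inr _ => True
    | Sum.inr _, Sum.inl _ => True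
    | Sum.inr a, Sum.inr b => H.Adj a b
  symm := by
    refine ⟨?_⟩
    rintro (a | a) (b | b) h
    · exact G.adj_symm h
    · trivial
    · trivial
    · exact H.adj_symm h
  loopless := by
    refine ⟨?_⟩
    rintro (a | a) h
    · exact G.loopless.irrefl a h
    · exact H.loopless.irrefl a h

/-- The family `{G + H : G ∈ 𝒢, H ∈ ℋ}` of joins. -/
def joinFam {V₁ V₂ : Type*} (𝒢 : Set (SimpleGraph V₁)) (ℋ : Set (SimpleGraph V₂)) :
    Set (SimpleGraph (V₁ ⊕ V₂)) :=
  {K | ∃ G ∈ 𝒢, ∃ H ∈ ℋ, K = joinG G H}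

/-- The family `𝒢_B(G)`: all graphs `G'` such that, for some permutation `f` of the
vertex set fixing `B` pointwise, `N_{G'}(x) = f(N_G(x))` for every `x ∈ B`. -/
def GBfam {V : Type*} (G : SimpleGraph V) (B : Set V) : Set (SimpleGraph V) :=
  {G' | ∃ f : Equiv.Perm V, (∀ x ∈ B, f x = x) ∧
    ∀ x ∈ B, G'.neighborSet x = f '' (G.neighborSet x)}

lemma fin_add_one_val {n : ℕ} [NeZero n] (hn : 2 ≤ n) (a : Fin n) :
    ((a + 1 : Fin n)).val = if a.val + 1 = n then 0 else a.val + 1 := by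
  rw [Fin.add_def]
  have h1 : ((1 : Fin n)).val = 1 := by rw [Fin.val_one']; exact Nat.mod_eq_of_lt (by omega)
  rw [h1]
  have ha := a.isLt
  split
  · next h => show (a.val + 1) % n = 0; rw [h, Nat.mod_self]
  · next h => show (a.val + 1) % n = a.val + 1; exact Nat.mod_eq_of_lt (by omega)

lemma fin_sub_one_val {n : ℕ} [NeZero n] (hn : 2 ≤ n) (a : Fin n) :
    ((a - 1 : Fin n)).val = if a.val = 0 then n - 1 else a.val - 1 := by
  rw [Fin.sub_def]
  have h1 : ((1 : Fin n)).val = 1 := by rw [Fin.val_one']; exact Nat.mod_eq_of_lt (by omega)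
  rw [h1]
  have ha := a.isLt
  split
  · next h => show (n - 1 + a.val) % n = n - 1; rw [h, Nat.add_zero]; exact Nat.mod_eq_of_lt (by omega)
  · next h =>
      show (n - 1 + a.val) % n = a.val - 1
      have h2 : n - 1 + a.val = n + (a.val - 1) := by omega
      rw [h2, Nat.add_mod_left]
      exact Nat.mod_eq_of_lt (by omega)

lemma fin_succ_ne_pred {n : ℕ} [NeZero n] (hn : 3 ≤ n) (x : Fin n) : x + 1 ≠ x - 1 := by
  intro h
  have hv := congrArg Fin.val h
  rw [fin_add_one_val (by omega), fin_sub_one_val (by omega)] at hv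
  have := x.isLt
  split_ifs at hv <;> omega

lemma cycle_count {n : ℕ} [NeZero n] (hn : 7 ≤ n) (C : SimpleGraph (Fin n))
    (hC : ∀ u v : Fin n, C.Adj u v ↔ (u = v + 1 ∨ v = u + 1))
    (S : Finset (Fin n))
    (hgen : ∀ x y : Fin n, x ∉ S → y ∉ S → x ≠ y → ∃ s ∈ S, Xor' (C.Adj s x) (C.Adj s y))
    (e : ℕ)
    (hU0 : ((Finset.univ.filter (fun v : Fin n => v ∉ S ∧ (v - 1 ∉ S ∧ v + 1 ∉ S))).card ≤ e)) :
    2 * n ≤ 5 * S.card + 2 * e := by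
  classical
  have hadj : ∀ s x : Fin n, C.Adj s x ↔ (s = x + 1 ∨ s = x - 1) := by
    intro s x
    rw [hC]
    constructor
    · rintro (h | h)
      · exact Or.inl h
      · right; rw [h, add_sub_cancel_right]
    · rintro (h | h)
      · exact Or.inl h
      · right; rw [h, sub_add_cancel]
  set d : Fin n → ℕ := fun v => (if v - 1 ∈ S then 1 else 0) + (if v + 1 ∈ S then 1 else 0) with hd
  set c : Fin n → ℕ := fun v => if v ∈ S then 0 else if d v = 1 then 2 else if d v = 2 then 1 else 0 with hcdef
  have hc2 : ∀ v, c v ≤ 2 := by intro v; simp only [hcdef]; split_ifs <;> omega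
  have hd2 : ∀ v, d v ≤ 2 := by intro v; simp only [hd]; split_ifs <;> omega
  -- c v = 2 implies v ∉ S ∧ d v = 1
  have hc2' : ∀ v, c v = 2 → v ∉ S ∧ d v = 1 := by
    intro v hv
    simp only [hcdef] at hv
    split_ifs at hv <;> simp_all
  -- pointwise bound
  have pc : ∀ s ∈ S, c (s + 1) + c (s - 1) ≤ 3 := by
    intro s hs
    by_contra hcon
    push_neg at hcon
    have h1 : c (s + 1) = 2 := by have := hc2 (s+1); have := hc2 (s-1); omega
    have h2 : c (s - 1) = 2 := by have := hc2 (s+1); have := hc2 (s-1); omega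
    obtain ⟨hns1, hds1⟩ := hc2' _ h1
    obtain ⟨hns2, hds2⟩ := hc2' _ h2
    -- from d (s+1) = 1 and (s+1)-1 = s ∈ S, get s+1+1 ∉ S
    have e1 : s + 1 + 1 ∉ S := by
      simp only [hd, add_sub_cancel_right] at hds1
      intro hmem
      rw [if_pos hs, if_pos hmem] at hds1
      omega
    have e2 : s - 1 - 1 ∉ S := by
      simp only [hd, sub_add_cancel] at hds2
      intro hmem
      rw [if_pos hmem, if_pos hs] at hds2
      omega
    obtain ⟨t, htS, hxor⟩ := hgen (s+1) (s-1) hns1 hns2 (fin_succ_ne_pred (by omega) s)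
    have ha1 : C.Adj t (s + 1) ↔ t = s := by
      rw [hadj]
      constructor
      · rintro (h | h)
        · exact absurd (h ▸ htS) e1
        · rw [add_sub_cancel_right] at h; exact h
      · intro h; right; rw [h, add_sub_cancel_right]
    have ha2 : C.Adj t (s - 1) ↔ t = s := by
      rw [hadj]
      constructor
      · rintro (h | h)
        · rw [sub_add_cancel] at h; exact h
        · exact absurd (h ▸ htS) e2
      · intro h; left; rw [h, sub_add_cancel]
    rcases hxor with ⟨hA, hB⟩ | ⟨hA, hB⟩
    · exact hB (ha2.mpr (ha1.mp hA))
    · exact hB (ha1.mpr (ha2.mp hA))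
  -- sum manipulation
  have key : ∑ v : Fin n, c v * d v ≤ 3 * S.card := by
    have expand : ∀ v : Fin n, c v * d v
        = (if v - 1 ∈ S then c v else 0) + (if v + 1 ∈ S then c v else 0) := by
      intro v
      simp only [hd, mul_add, mul_ite, mul_one, mul_zero]
    calc ∑ v : Fin n, c v * d v
        = (∑ v : Fin n, if v - 1 ∈ S then c v else 0)
          + (∑ v : Fin n, if v + 1 ∈ S then c v else 0) := by
          rw [← Finset.sum_add_distrib]; exact Finset.sum_congr rfl (fun v _ => expand v)
      _ = (∑ s ∈ S, c (s + 1)) + (∑ s ∈ S, c (s - 1)) := by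
          congr 1
          · rw [Fintype.sum_equiv (Equiv.subRight (1 : Fin n))
              (fun v => if v - 1 ∈ S then c v else 0)
              (fun v => if v ∈ S then c (v + 1) else 0)
              (fun v => by simp [sub_add_cancel])]
            rw [Finset.sum_ite_mem, Finset.univ_inter]
          · rw [Fintype.sum_equiv (Equiv.addRight (1 : Fin n))
              (fun v => if v + 1 ∈ S then c v else 0)
              (fun v => if v ∈ S then c (v - 1) else 0)
              (fun v => by simp [add_sub_cancel_right])]
            rw [Finset.sum_ite_mem, Finset.univ_inter]
      _ = ∑ s ∈ S, (c (s + 1) + c (s - 1)) := by rw [Finset.sum_add_distrib]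
      _ ≤ ∑ s ∈ S, 3 := Finset.sum_le_sum pc
      _ = 3 * S.card := by rw [Finset.sum_const, smul_eq_mul, mul_comm]
  -- the weight sum counts 2 for each vertex outside S with d ≠ 0
  set W : Finset (Fin n) := Finset.univ.filter (fun v => v ∉ S ∧ d v ≠ 0) with hW
  have hsumW : ∑ v : Fin n, c v * d v = 2 * W.card := by
    have hz : ∀ v ∈ Finset.univ \ W, c v * d v = 0 := by
      intro v hv
      rw [Finset.mem_sdiff, hW, Finset.mem_filter] at hv
      have hv' := hv.2
      by_cases hvS : v ∈ S
      · simp only [hcdef, if_pos hvS]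
        ring
      · have hdv : d v = 0 := by
          by_contra hne
          exact hv' ⟨Finset.mem_univ v, hvS, hne⟩
        rw [hdv, mul_zero]
    have hW2 : ∀ v ∈ W, c v * d v = 2 := by
      intro v hv
      rw [hW, Finset.mem_filter] at hv
      obtain ⟨-, hvS, hdv⟩ := hv
      have h12 : d v = 1 ∨ d v = 2 := by have := hd2 v; omega
      rcases h12 with h | h
      · simp only [hcdef, if_neg hvS, h]; norm_num
      · simp only [hcdef, if_neg hvS, h]; norm_num
    calc ∑ v : Fin n, c v * d v = ∑ v ∈ W, c v * d v := by
          refine (Finset.sum_subset (Finset.subset_univ W) ?_).symm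
          intro v _ hv
          exact hz v (Finset.mem_sdiff.mpr ⟨Finset.mem_univ v, hv⟩)
      _ = ∑ v ∈ W, 2 := Finset.sum_congr rfl hW2
      _ = 2 * W.card := by rw [Finset.sum_const, smul_eq_mul, mul_comm]
  -- partition of the complement of S
  set U0 : Finset (Fin n) := Finset.univ.filter (fun v : Fin n => v ∉ S ∧ (v - 1 ∉ S ∧ v + 1 ∉ S)) with hU0'
  have hU0W : U0.card + W.card = n - S.card := by
    have h1 : ∀ v : Fin n, (v ∉ S ∧ (v - 1 ∉ S ∧ v + 1 ∉ S)) ↔ (v ∉ S ∧ d v = 0) := by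
      intro v
      simp only [hd]
      constructor
      · rintro ⟨h1, h2, h3⟩; rw [if_neg h2, if_neg h3]; exact ⟨h1, rfl⟩
      · rintro ⟨h1, h2⟩
        refine ⟨h1, ?_, ?_⟩ <;> intro hmem
        · rw [if_pos hmem] at h2; omega
        · rw [if_pos hmem] at h2; split_ifs at h2 <;> omega
    have e0 : U0 = (Finset.univ.filter (fun v : Fin n => v ∉ S)).filter (fun v => d v = 0) := by
      ext v
      simp only [hU0', Finset.filter_filter, Finset.mem_filter, Finset.mem_univ, true_and]
      exact h1 v
    have eW : W = (Finset.univ.filter (fun v : Fin n => v ∉ S)).filter (fun v => ¬ d v = 0) := by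
      rw [hW, Finset.filter_filter]
    have hcardU : (Finset.univ.filter (fun v : Fin n => v ∉ S)).card = n - S.card := by
      have huniv : Finset.univ.filter (fun v : Fin n => v ∉ S) = Finset.univ \ S := by
        ext v; simp
      rw [huniv, Finset.card_sdiff_of_subset (Finset.subset_univ S), Finset.card_univ, Fintype.card_fin]
    rw [e0, eW, Finset.card_filter_add_card_filter_not, hcardU]
  have hkn : S.card ≤ n := by
    have := Finset.card_le_card (Finset.subset_univ S)
    simpa using this
  omega


lemma cycle_gen_bound {n : ℕ} [NeZero n] (hn : 7 ≤ n) (C : SimpleGraph (Fin n))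
    (hC : ∀ u v : Fin n, C.Adj u v ↔ (u = v + 1 ∨ v = u + 1))
    (S : Finset (Fin n))
    (hgen : ∀ x y : Fin n, x ∉ S → y ∉ S → x ≠ y → ∃ s ∈ S, Xor' (C.Adj s x) (C.Adj s y)) :
    2 * n ≤ 5 * S.card + 2 := by
  classical
  have hU0 : (Finset.univ.filter
      (fun v : Fin n => v ∉ S ∧ (v - 1 ∉ S ∧ v + 1 ∉ S))).card ≤ 1 := by
    rw [Finset.card_le_one]
    intro a ha b hb
    by_contra hne
    rw [Finset.mem_filter] at ha hb
    obtain ⟨-, haS, ha1, ha2⟩ := ha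
    obtain ⟨-, hbS, hb1, hb2⟩ := hb
    obtain ⟨t, htS, hxor⟩ := hgen a b haS hbS hne
    have hna : ¬ C.Adj t a := by
      rw [hC]
      rintro (h | h)
      · exact ha2 (h ▸ htS)
      · have hta : a - 1 = t := by rw [h, add_sub_cancel_right]
        exact ha1 (hta ▸ htS)
    have hnb : ¬ C.Adj t b := by
      rw [hC]
      rintro (h | h)
      · exact hb2 (h ▸ htS)
      · have htb : b - 1 = t := by rw [h, add_sub_cancel_right]
        exact hb1 (htb ▸ htS)
    rcases hxor with ⟨hA, -⟩ | ⟨hA, -⟩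
    · exact hna hA
    · exact hnb hA
  have := cycle_count hn C hC S hgen 1 hU0
  omega

lemma cycle_gen_dom_bound {n : ℕ} [NeZero n] (hn : 7 ≤ n) (C : SimpleGraph (Fin n))
    (hC : ∀ u v : Fin n, C.Adj u v ↔ (u = v + 1 ∨ v = u + 1))
    (S : Finset (Fin n))
    (hgen : ∀ x y : Fin n, x ∉ S → y ∉ S → x ≠ y → ∃ s ∈ S, Xor' (C.Adj s x) (C.Adj s y))
    (hdom : ∀ v : Fin n, v ∉ S → ∃ s ∈ S, C.Adj s v) :
    2 * n ≤ 5 * S.card := by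
  classical
  have hU0 : (Finset.univ.filter
      (fun v : Fin n => v ∉ S ∧ (v - 1 ∉ S ∧ v + 1 ∉ S))).card ≤ 0 := by
    rw [Nat.le_zero, Finset.card_eq_zero, Finset.eq_empty_iff_forall_notMem]
    intro v hv
    rw [Finset.mem_filter] at hv
    obtain ⟨-, hvS, hv1, hv2⟩ := hv
    obtain ⟨s, hsS, hadj⟩ := hdom v hvS
    rw [hC] at hadj
    rcases hadj with h | h
    · exact hv2 (h ▸ hsS)
    · have hsv : v - 1 = s := by rw [h, add_sub_cancel_right]
      exact hv1 (hsv ▸ hsS)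
  have := cycle_count hn C hC S hgen 0 hU0
  omega


lemma keyA (m a b : ℕ) (hm : 2 ≤ m) (ha : a < 5*m+1) (hb : b < 5*m+1)
    (hA : ¬(a%5=1 ∨ a%5=3)) (hB : ¬(b%5=1 ∨ b%5=3)) (hne : a ≠ b) :
    (∃ w, w < 5*m+1 ∧ (w%5=1 ∨ w%5=3) ∧ (w+1 = a ∨ a+1 = w) ∧
      ¬(w+1 = b ∨ b+1 = w ∨ (w = 5*m ∧ b = 0) ∨ (b = 5*m ∧ w = 0))) ∨
    (∃ w, w < 5*m+1 ∧ (w%5=1 ∨ w%5=3) ∧ (w+1 = b ∨ b+1 = w) ∧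
      ¬(w+1 = a ∨ a+1 = w ∨ (w = 5*m ∧ a = 0) ∨ (a = 5*m ∧ w = 0))) := by
  have h5a : a % 5 = 0 ∨ a % 5 = 2 ∨ a % 5 = 4 := by omega
  have h5b : b % 5 = 0 ∨ b % 5 = 2 ∨ b % 5 = 4 := by omega
  rcases h5a with ha5|ha5|ha5 <;> rcases h5b with hb5|hb5|hb5 <;>
    rcases eq_or_ne a (5*m) with ha'|ha' <;> rcases eq_or_ne b (5*m) with hb'|hb' <;>
    first
      | (exact Or.inl ⟨a+1, by omega, by omega, by omega, by omega⟩)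
      | (exact Or.inl ⟨a-1, by omega, by omega, by omega, by omega⟩)
      | (exact Or.inr ⟨b+1, by omega, by omega, by omega, by omega⟩)
      | (exact Or.inr ⟨b-1, by omega, by omega, by omega, by omega⟩)


lemma keyB (m a b : ℕ) (hm : 1 ≤ m) (ha : a < 5*m+3) (hb : b < 5*m+3)
    (hA : ¬(((a%5=1 ∨ a%5=3) ∧ a < 5*m) ∨ a = 5*m+2))
    (hB : ¬(((b%5=1 ∨ b%5=3) ∧ b < 5*m) ∨ b = 5*m+2)) (hne : a ≠ b) :
    (∃ w, w < 5*m+3 ∧ (((w%5=1 ∨ w%5=3) ∧ w < 5*m) ∨ w = 5*m+2) ∧ (w+1 = a ∨ a+1 = w) ∧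
      ¬(w+1 = b ∨ b+1 = w ∨ (w = 5*m+2 ∧ b = 0) ∨ (b = 5*m+2 ∧ w = 0))) ∨
    (∃ w, w < 5*m+3 ∧ (((w%5=1 ∨ w%5=3) ∧ w < 5*m) ∨ w = 5*m+2) ∧ (w+1 = b ∨ b+1 = w) ∧
      ¬(w+1 = a ∨ a+1 = w ∨ (w = 5*m+2 ∧ a = 0) ∨ (a = 5*m+2 ∧ w = 0))) := by
  have h5a : a = 5*m+1 ∨ a = 5*m ∨ (a%5 = 0 ∧ a ≠ 5*m) ∨ a%5=2 ∨ a%5=4 := by omega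
  have h5b : b = 5*m+1 ∨ b = 5*m ∨ (b%5 = 0 ∧ b ≠ 5*m) ∨ b%5=2 ∨ b%5=4 := by omega
  rcases h5a with ha5|ha5|ha5|ha5|ha5 <;> rcases h5b with hb5|hb5|hb5|hb5|hb5 <;>
    first
      | (exact Or.inl ⟨a+1, by omega, by omega, by omega, by omega⟩)
      | (exact Or.inl ⟨a-1, by omega, by omega, by omega, by omega⟩)
      | (exact Or.inr ⟨b+1, by omega, by omega, by omega, by omega⟩)
      | (exact Or.inr ⟨b-1, by omega, by omega, by omega, by omega⟩)

lemma cardGen (n m : ℕ) (hm : 1 ≤ m) (hn : 5*m ≤ n) [NeZero n] :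
    (Finset.univ.filter (fun x : Fin n => (x.val%5=1 ∨ x.val%5=3) ∧ x.val < 5*m)).card = 2*m := by
  classical
  have hinj : Function.Injective
      (fun t : Fin (2*m) => (⟨5*(t.val/2) + 1 + 2*(t.val%2), by have := t.isLt; omega⟩ : Fin n)) := by
    intro t t' h
    have hv := congrArg Fin.val h
    simp only at hv
    have := t.isLt
    have := t'.isLt
    exact Fin.ext (by omega)
  have himg : Finset.univ.filter (fun x : Fin n => (x.val%5=1 ∨ x.val%5=3) ∧ x.val < 5*m)
      = Finset.univ.image
        (fun t : Fin (2*m) => (⟨5*(t.val/2) + 1 + 2*(t.val%2), by have := t.isLt; omega⟩ : Fin n)) := by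
    ext x
    simp only [Finset.mem_filter, Finset.mem_univ, true_and, Finset.mem_image]
    constructor
    · rintro ⟨hx5, hxlt⟩
      refine ⟨⟨2*(x.val/5) + (if x.val%5 = 3 then 1 else 0), by split_ifs <;> omega⟩, ?_⟩
      apply Fin.ext
      simp only
      split_ifs <;> omega
    · rintro ⟨t, rfl⟩
      have := t.isLt
      simp only
      omega
  rw [himg, Finset.card_image_of_injective _ hinj, Finset.card_univ, Fintype.card_fin]

section CoronaAdj
variable {V V' : Type*} (G : SimpleGraph V) (H : SimpleGraph V')

lemma corona_adj_inl_inl (i j : V) :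
    (corona G H).Adj (Sum.inl i) (Sum.inl j) ↔ G.Adj i j := Iff.rfl

lemma corona_adj_inl_inr (i : V) (p : V × V') :
    (corona G H).Adj (Sum.inl i) (Sum.inr p) ↔ i = p.1 := Iff.rfl

lemma corona_adj_inr_inl (p : V × V') (j : V) :
    (corona G H).Adj (Sum.inr p) (Sum.inl j) ↔ p.1 = j := Iff.rfl

lemma corona_adj_inr_inr (p q : V × V') :
    (corona G H).Adj (Sum.inr p) (Sum.inr q) ↔ p.1 = q.1 ∧ H.Adj p.2 q.2 := Iff.rfl

end CoronaAdj

 theorem statement_9 {V : Type*} [Fintype V] [Nontrivial V]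
    (𝒢 : Set (SimpleGraph V)) (h𝒢ne : 𝒢.Nonempty) (h𝒢 : ∀ G ∈ 𝒢, G.Connected)
    (n : ℕ) (hn : 7 ≤ n) (h15 : n % 5 = 1 ∨ n % 5 = 3)
    (Pn Cn : SimpleGraph (Fin n))
    (hPn : Pn = SimpleGraph.pathGraph n)
    (hCn : Cn = Pn ⊔ SimpleGraph.fromEdgeSet {s((⟨0, by omega⟩ : Fin n), (⟨n - 1, by omega⟩ : Fin n))})
    (B : Set (Fin n)) (hB : IsSimAdjBasis {Pn, Cn} B)
    (ℋ₁ ℋ₂ : Set (SimpleGraph (Fin n)))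
    (hsub₁ : ℋ₁ ⊆ GBfam Pn B) (hpath : ∀ H ∈ ℋ₁, Nonempty (H ≃g Pn)) (hP : Pn ∈ ℋ₁)
    (hsub₂ : ℋ₂ ⊆ GBfam Cn B) (hcyc : ∀ H ∈ ℋ₂, Nonempty (H ≃g Cn)) (hC : Cn ∈ ℋ₂) :
    SdA (coronaFam 𝒢 (ℋ₁ ∪ ℋ₂)) = Fintype.card V * ((2 * n + 2) / 5 + 1) - 1 := by
  classical
  haveI : NeZero n := ⟨by omega⟩
  have hn8 : 8 ≤ n := by omega
  set N := Fintype.card V with hN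
  set r := (2*n+2)/5 with hrdef
  have hr3 : 3 ≤ r := by omega
  have hN1 : 1 ≤ N := Fintype.card_pos
  -- adjacency characterizations
  have hPadj : ∀ u v : Fin n, Pn.Adj u v ↔ (u.val+1 = v.val ∨ v.val+1 = u.val) := by
    subst hPn; intro u v; exact pathGraph_adj
  have hPC : ∀ u v : Fin n, Pn.Adj u v → Cn.Adj u v := by
    subst hCn; intro u v h; exact Or.inl h
  have hCadjval : ∀ u v : Fin n, Cn.Adj u v ↔
      (u.val+1 = v.val ∨ v.val+1 = u.val ∨ (u.val = n-1 ∧ v.val = 0) ∨ (v.val = n-1 ∧ u.val = 0)) := by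
    intro u v
    have hu := u.isLt
    have hv := v.isLt
    rw [hCn, SimpleGraph.sup_adj, SimpleGraph.fromEdgeSet_adj, hPadj]
    simp only [Set.mem_singleton_iff, Sym2.eq_iff, Fin.ext_iff, ne_eq]
    omega
  have hCadj : ∀ u v : Fin n, Cn.Adj u v ↔ (u = v + 1 ∨ v = u + 1) := by
    intro u v
    rw [hCadjval, Fin.ext_iff, Fin.ext_iff, fin_add_one_val (by omega), fin_add_one_val (by omega)]
    have := u.isLt; have := v.isLt
    split_ifs <;> omega
  -- the explicit simultaneous adjacency generator
  have hDex : ∃ D : Finset (Fin n), D.card = r ∧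
      (∀ x y : Fin n, x ∉ D → y ∉ D → x ≠ y →
        (∃ s ∈ D, Pn.Adj s x ∧ ¬ Cn.Adj s y) ∨ (∃ s ∈ D, Pn.Adj s y ∧ ¬ Cn.Adj s x)) := by
    have hncase : (∃ m, 2 ≤ m ∧ n = 5*m+1) ∨ (∃ m, 1 ≤ m ∧ n = 5*m+3) := by
      rcases h15 with h | h
      · exact Or.inl ⟨n/5, by omega, by omega⟩
      · exact Or.inr ⟨n/5, by omega, by omega⟩
    rcases hncase with ⟨m, hm, hnm⟩ | ⟨m, hm, hnm⟩
    · -- n = 5m+1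
      refine ⟨Finset.univ.filter (fun x : Fin n => x.val%5=1 ∨ x.val%5=3), ?_, ?_⟩
      · have hDeq : Finset.univ.filter (fun x : Fin n => x.val%5=1 ∨ x.val%5=3)
            = Finset.univ.filter (fun x : Fin n => (x.val%5=1 ∨ x.val%5=3) ∧ x.val < 5*m) := by
          ext x
          simp only [Finset.mem_filter, Finset.mem_univ, true_and]
          have := x.isLt
          omega
        rw [hDeq, cardGen n m (by omega) (by omega)]
        omega
      · intro x y hx hy hne
        have hx' : ¬(x.val%5=1 ∨ x.val%5=3) := by simpa using hx
        have hy' : ¬(y.val%5=1 ∨ y.val%5=3) := by simpa using hy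
        have hne' : x.val ≠ y.val := fun h => hne (Fin.ext h)
        have hxlt : x.val < 5*m+1 := by have := x.isLt; omega
        have hylt : y.val < 5*m+1 := by have := y.isLt; omega
        rcases keyA m x.val y.val hm hxlt hylt hx' hy' hne' with
          ⟨w, hw1, hw2, hw3, hw4⟩ | ⟨w, hw1, hw2, hw3, hw4⟩
        · refine Or.inl ⟨⟨w, by omega⟩, by simpa using hw2, ?_, ?_⟩
          · rw [hPadj]; exact hw3
          · rw [hCadjval]; simp only [Fin.val_mk]; omega
        · refine Or.inr ⟨⟨w, by omega⟩, by simpa using hw2, ?_, ?_⟩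
          · rw [hPadj]; exact hw3
          · rw [hCadjval]; simp only [Fin.val_mk]; omega
    · -- n = 5m+3
      refine ⟨Finset.univ.filter
          (fun x : Fin n => ((x.val%5=1 ∨ x.val%5=3) ∧ x.val < 5*m) ∨ x.val = 5*m+2), ?_, ?_⟩
      · have hDeq : Finset.univ.filter
            (fun x : Fin n => ((x.val%5=1 ∨ x.val%5=3) ∧ x.val < 5*m) ∨ x.val = 5*m+2)
            = (Finset.univ.filter (fun x : Fin n => (x.val%5=1 ∨ x.val%5=3) ∧ x.val < 5*m))
              ∪ {(⟨5*m+2, by omega⟩ : Fin n)} := by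
          ext x
          simp only [Finset.mem_filter, Finset.mem_univ, true_and, Finset.mem_union,
            Finset.mem_singleton, Fin.ext_iff]
          try omega
        rw [hDeq, Finset.card_union_of_disjoint (by
          rw [Finset.disjoint_singleton_right]
          simp only [Finset.mem_filter, Finset.mem_univ, true_and]
          omega), cardGen n m (by omega) (by omega), Finset.card_singleton]
        omega
      · intro x y hx hy hne
        have hx' : ¬(((x.val%5=1 ∨ x.val%5=3) ∧ x.val < 5*m) ∨ x.val = 5*m+2) := by simpa using hx
        have hy' : ¬(((y.val%5=1 ∨ y.val%5=3) ∧ y.val < 5*m) ∨ y.val = 5*m+2) := by simpa using hy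
        have hne' : x.val ≠ y.val := fun h => hne (Fin.ext h)
        have hxlt : x.val < 5*m+3 := by have := x.isLt; omega
        have hylt : y.val < 5*m+3 := by have := y.isLt; omega
        rcases keyB m x.val y.val hm hxlt hylt hx' hy' hne' with
          ⟨w, hw1, hw2, hw3, hw4⟩ | ⟨w, hw1, hw2, hw3, hw4⟩
        · refine Or.inl ⟨⟨w, by omega⟩, by simpa using hw2, ?_, ?_⟩
          · rw [hPadj]; exact hw3
          · rw [hCadjval]; simp only [Fin.val_mk]; omega
        · refine Or.inr ⟨⟨w, by omega⟩, by simpa using hw2, ?_, ?_⟩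
          · rw [hPadj]; exact hw3
          · rw [hCadjval]; simp only [Fin.val_mk]; omega
  obtain ⟨D, hDcard, hDkey⟩ := hDex
  have hDgenP : IsAdjGen Pn (↑D : Set (Fin n)) := by
    intro x y hx hy hne
    rcases hDkey x y (by simpa using hx) (by simpa using hy) hne with ⟨s, hs, h1, h2⟩ | ⟨s, hs, h1, h2⟩
    · exact ⟨s, by simpa using hs, Or.inl ⟨h1, fun h => h2 (hPC _ _ h)⟩⟩
    · exact ⟨s, by simpa using hs, Or.inr ⟨h1, fun h => h2 (hPC _ _ h)⟩⟩
  have hDgenC : IsAdjGen Cn (↑D : Set (Fin n)) := by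
    intro x y hx hy hne
    rcases hDkey x y (by simpa using hx) (by simpa using hy) hne with ⟨s, hs, h1, h2⟩ | ⟨s, hs, h1, h2⟩
    · exact ⟨s, by simpa using hs, Or.inl ⟨hPC _ _ h1, h2⟩⟩
    · exact ⟨s, by simpa using hs, Or.inr ⟨hPC _ _ h1, h2⟩⟩
  have hDsim : IsSimAdjGen {Pn, Cn} (↑D : Set (Fin n)) := by
    intro Hh hH
    rcases hH with rfl | hH
    · exact hDgenP
    · rw [Set.mem_singleton_iff] at hH; subst hH; exact hDgenC
  -- SdA {Pn, Cn} = r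
  have hlow : ∀ k ∈ {k | ∃ S : Set (Fin n), S.ncard = k ∧ IsSimAdjGen {Pn, Cn} S}, r ≤ k := by
    rintro k ⟨S, hScard, hSsim⟩
    have hgenC : IsAdjGen Cn S := hSsim Cn (by simp)
    set F := S.toFinite.toFinset with hF
    have hFk : F.card = k := by rw [← hScard, Set.ncard_eq_toFinset_card S S.toFinite]
    have := cycle_gen_bound (n := n) (by omega) Cn hCadj F (by
      intro x y hx hy hne
      rw [hF, Set.Finite.mem_toFinset] at hx hy
      obtain ⟨s, hs, hxor⟩ := hgenC x y hx hy hne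
      exact ⟨s, by rw [hF, Set.Finite.mem_toFinset]; exact hs, hxor⟩)
    omega
  have hSdAr : SdA {Pn, Cn} = r := by
    refine le_antisymm (Nat.sInf_le ⟨(↑D : Set (Fin n)), by
      rw [Set.ncard_coe_finset]; exact hDcard, hDsim⟩) ?_
    exact le_csInf ⟨r, (↑D : Set (Fin n)), by rw [Set.ncard_coe_finset]; exact hDcard, hDsim⟩ hlow
  -- facts about B
  have hBsim : IsSimAdjGen {Pn, Cn} B := hB.1
  have hBgenP : IsAdjGen Pn B := hBsim Pn (by simp)
  have hBgenC : IsAdjGen Cn B := hBsim Cn (by simp)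
  have hBcard : B.ncard = r := by rw [hB.2, hSdAr]
  have hBne : B.Nonempty := by
    apply Set.nonempty_of_ncard_ne_zero
    omega
  have hBnotall : ∀ v : Fin n, ∃ b ∈ B, ¬ Cn.Adj b v := by
    intro v
    by_contra hcon
    push_neg at hcon
    have hsub : B ⊆ ({v + 1, v - 1} : Set (Fin n)) := by
      intro b hb
      rcases (hCadj b v).mp (hcon b hb) with h1 | h1
      · exact Or.inl h1
      · right
        rw [Set.mem_singleton_iff, h1, add_sub_cancel_right]
    have h2 := Set.ncard_le_ncard hsub (Set.toFinite _)
    have h3 : ({v + 1, v - 1} : Set (Fin n)).ncard ≤ 2 := by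
      have := Set.ncard_insert_le (v+1) ({v - 1} : Set (Fin n))
      simpa [Set.ncard_singleton] using this
    omega
  -- transfer lemma for members of the family
  have hHfacts : ∀ Hh ∈ ℋ₁ ∪ ℋ₂, (IsAdjGen Hh B) ∧ (∀ w ∉ B, ∃ b ∈ B, ¬ Hh.Adj b w) := by
    intro Hh hH
    have hbase : ∃ base : SimpleGraph (Fin n), Hh ∈ GBfam base B ∧ IsAdjGen base B ∧
        (∀ u v, base.Adj u v → Cn.Adj u v) := by
      rcases hH with h | h
      · exact ⟨Pn, hsub₁ h, hBgenP, hPC⟩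
      · exact ⟨Cn, hsub₂ h, hBgenC, fun u v hh => hh⟩
    obtain ⟨base, hmem, hbgen, hble⟩ := hbase
    obtain ⟨f, hfix, hnbr⟩ := hmem
    have hout : ∀ y, y ∉ B → f.symm y ∉ B := by
      intro y hy hcmem
      apply hy
      have h1 : f (f.symm y) = f.symm y := hfix _ hcmem
      rw [Equiv.apply_symm_apply] at h1
      rw [h1]; exact hcmem
    have hadjH : ∀ b ∈ B, ∀ y, Hh.Adj b y ↔ base.Adj b (f.symm y) := by
      intro b hb y
      have h1 := hnbr b hb
      constructor
      · intro h
        have h2 : y ∈ Hh.neighborSet b := h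
        rw [h1] at h2
        obtain ⟨z, hz, hzy⟩ := h2
        have h3 : f.symm y = z := by rw [← hzy, Equiv.symm_apply_apply]
        rw [h3]; exact hz
      · intro h
        have h2 : y ∈ f '' base.neighborSet b := ⟨f.symm y, h, Equiv.apply_symm_apply f y⟩
        rw [← h1] at h2
        exact h2
    constructor
    · intro x y hx hy hne
      obtain ⟨b, hb, hxor⟩ := hbgen (f.symm x) (f.symm y) (hout x hx) (hout y hy)
        (fun hcmem => hne (f.symm.injective hcmem))
      refine ⟨b, hb, ?_⟩
      rcases hxor with ⟨h1, h2⟩ | ⟨h1, h2⟩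
      · exact Or.inl ⟨(hadjH b hb x).mpr h1, fun hcc => h2 ((hadjH b hb y).mp hcc)⟩
      · exact Or.inr ⟨(hadjH b hb y).mpr h1, fun hcc => h2 ((hadjH b hb x).mp hcc)⟩
    · intro w hw
      obtain ⟨b, hb, hnc⟩ := hBnotall (f.symm w)
      exact ⟨b, hb, fun hcc => hnc (hble _ _ ((hadjH b hb w).mp hcc))⟩
  -- the target value
  have hgoal : Fintype.card V * ((2 * n + 2) / 5 + 1) - 1 = N * (r+1) - 1 := rfl
  rw [hgoal]
  -- upper bound construction
  have hub : ∃ Sstar : Set (V ⊕ V × Fin n),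
      Sstar.ncard = N * (r+1) - 1 ∧ IsSimAdjGen (coronaFam 𝒢 (ℋ₁ ∪ ℋ₂)) Sstar := by
    obtain ⟨i₀⟩ : Nonempty V := inferInstance
    set Bf := B.toFinite.toFinset with hBf
    have hBfB : ∀ b, b ∈ Bf ↔ b ∈ B := fun b => Set.Finite.mem_toFinset _
    have hBfcard : Bf.card = r := by
      rw [← hBcard, Set.ncard_eq_toFinset_card B B.toFinite]
    set Sf : Finset (V ⊕ V × Fin n) :=
      ((Finset.univ.erase i₀).image Sum.inl) ∪ ((Finset.univ ×ˢ Bf).image Sum.inr) with hSf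
    have hmeminl : ∀ i : V, Sum.inl i ∈ Sf ↔ i ≠ i₀ := by
      intro i
      rw [hSf, Finset.mem_union]
      constructor
      · rintro (h | h)
        · rw [Finset.mem_image] at h
          obtain ⟨j, hj, hji⟩ := h
          rw [← Sum.inl.inj hji]
          exact Finset.ne_of_mem_erase hj
        · rw [Finset.mem_image] at h
          obtain ⟨p, hp, hpe⟩ := h
          exact absurd hpe (by simp)
      · intro h
        exact Or.inl (Finset.mem_image_of_mem _ (Finset.mem_erase.mpr ⟨h, Finset.mem_univ i⟩))
    have hmeminr : ∀ (i : V) (b : Fin n), Sum.inr (i, b) ∈ Sf ↔ b ∈ B := by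
      intro i b
      rw [hSf, Finset.mem_union]
      constructor
      · rintro (h | h)
        · rw [Finset.mem_image] at h
          obtain ⟨j, hj, hji⟩ := h
          exact absurd hji (by simp)
        · rw [Finset.mem_image] at h
          obtain ⟨p, hp, hpe⟩ := h
          have hpb : p = (i, b) := Sum.inr.inj hpe
          rw [hpb] at hp
          rw [Finset.mem_product] at hp
          exact (hBfB b).mp hp.2
      · intro h
        refine Or.inr (Finset.mem_image_of_mem _ ?_)
        rw [Finset.mem_product]
        exact ⟨Finset.mem_univ i, (hBfB b).mpr h⟩
    have hdisj : Disjoint ((Finset.univ.erase i₀).image Sum.inl)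
        ((Finset.univ ×ˢ Bf).image (Sum.inr : V × Fin n → V ⊕ V × Fin n)) := by
      rw [Finset.disjoint_left]
      intro a ha hb
      rw [Finset.mem_image] at ha hb
      obtain ⟨x, -, rfl⟩ := ha
      obtain ⟨p, -, hp⟩ := hb
      exact absurd hp (by simp)
    have hcard : Sf.card = N * (r+1) - 1 := by
      rw [hSf, Finset.card_union_of_disjoint hdisj,
          Finset.card_image_of_injective _ Sum.inl_injective,
          Finset.card_image_of_injective _ Sum.inr_injective,
          Finset.card_erase_of_mem (Finset.mem_univ i₀), Finset.card_univ,
          Finset.card_product, Finset.card_univ, hBfcard]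
      rw [Nat.mul_succ, hN]
      have h1 : 1 ≤ Fintype.card V := Fintype.card_pos
      omega
    refine ⟨↑Sf, by rw [Set.ncard_coe_finset]; exact hcard, ?_⟩
    rintro K ⟨G, hG, Hh, hHmem, rfl⟩
    obtain ⟨hHgen, hHnd⟩ := hHfacts Hh hHmem
    intro x y hx hy hne
    rw [Finset.mem_coe] at hx hy
    match x, y with
    | Sum.inl i, Sum.inl j =>
      exfalso
      have hi : i = i₀ := by
        by_contra hcc; exact hx ((hmeminl i).mpr hcc)
      have hj : j = i₀ := by
        by_contra hcc; exact hy ((hmeminl j).mpr hcc)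
      exact hne (by rw [hi, hj])
    | Sum.inl i, Sum.inr (j, w) =>
      have hi : i = i₀ := by
        by_contra hcc; exact hx ((hmeminl i).mpr hcc)
      have hw : w ∉ B := by
        intro hcc; exact hy ((hmeminr j w).mpr hcc)
      by_cases hj : j = i₀
      · obtain ⟨b, hbB, hnadj⟩ := hHnd w hw
        refine ⟨Sum.inr (i₀, b), Finset.mem_coe.mpr ((hmeminr i₀ b).mpr hbB), Or.inl ⟨?_, ?_⟩⟩
        · rw [corona_adj_inr_inl]; exact hi.symm
        · rw [corona_adj_inr_inr]
          rintro ⟨-, hadj⟩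
          exact hnadj hadj
      · obtain ⟨b, hbB⟩ := hBne
        refine ⟨Sum.inr (i₀, b), Finset.mem_coe.mpr ((hmeminr i₀ b).mpr hbB), Or.inl ⟨?_, ?_⟩⟩
        · rw [corona_adj_inr_inl]; exact hi.symm
        · rw [corona_adj_inr_inr]
          rintro ⟨h1, -⟩
          exact hj h1.symm
    | Sum.inr (j, w), Sum.inl i =>
      have hi : i = i₀ := by
        by_contra hcc; exact hy ((hmeminl i).mpr hcc)
      have hw : w ∉ B := by
        intro hcc; exact hx ((hmeminr j w).mpr hcc)
      by_cases hj : j = i₀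
      · obtain ⟨b, hbB, hnadj⟩ := hHnd w hw
        refine ⟨Sum.inr (i₀, b), Finset.mem_coe.mpr ((hmeminr i₀ b).mpr hbB), Or.inr ⟨?_, ?_⟩⟩
        · rw [corona_adj_inr_inl]; exact hi.symm
        · rw [corona_adj_inr_inr]
          rintro ⟨-, hadj⟩
          exact hnadj hadj
      · obtain ⟨b, hbB⟩ := hBne
        refine ⟨Sum.inr (i₀, b), Finset.mem_coe.mpr ((hmeminr i₀ b).mpr hbB), Or.inr ⟨?_, ?_⟩⟩
        · rw [corona_adj_inr_inl]; exact hi.symm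
        · rw [corona_adj_inr_inr]
          rintro ⟨h1, -⟩
          exact hj h1.symm
    | Sum.inr (i, w), Sum.inr (j, w') =>
      have hw : w ∉ B := by
        intro hcc; exact hx ((hmeminr i w).mpr hcc)
      have hw' : w' ∉ B := by
        intro hcc; exact hy ((hmeminr j w').mpr hcc)
      by_cases hij : i = j
      · subst hij
        have hne' : w ≠ w' := by
          intro hcc; exact hne (by rw [hcc])
        obtain ⟨b, hbB, hxor⟩ := hHgen w w' hw hw' hne'
        refine ⟨Sum.inr (i, b), Finset.mem_coe.mpr ((hmeminr i b).mpr hbB), ?_⟩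
        rcases hxor with ⟨h1, h2⟩ | ⟨h1, h2⟩
        · exact Or.inl ⟨(corona_adj_inr_inr G Hh _ _).mpr ⟨rfl, h1⟩,
            fun hcc => h2 ((corona_adj_inr_inr G Hh _ _).mp hcc).2⟩
        · exact Or.inr ⟨(corona_adj_inr_inr G Hh _ _).mpr ⟨rfl, h1⟩,
            fun hcc => h2 ((corona_adj_inr_inr G Hh _ _).mp hcc).2⟩
      · by_cases hii : i = i₀
        · have hjj : j ≠ i₀ := fun hcc => hij (by rw [hii, hcc])
          refine ⟨Sum.inl j, Finset.mem_coe.mpr ((hmeminl j).mpr hjj), Or.inr ⟨?_, ?_⟩⟩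
          · rw [corona_adj_inl_inr]
          · rw [corona_adj_inl_inr]
            intro hcc
            exact hij (hcc.symm)
        · refine ⟨Sum.inl i, Finset.mem_coe.mpr ((hmeminl i).mpr hii), Or.inl ⟨?_, ?_⟩⟩
          · rw [corona_adj_inl_inr]
          · rw [corona_adj_inl_inr]
            intro hcc
            exact hij hcc
  -- lower bound
  have hlb : ∀ k ∈ {k | ∃ S : Set (V ⊕ V × Fin n), S.ncard = k ∧
      IsSimAdjGen (coronaFam 𝒢 (ℋ₁ ∪ ℋ₂)) S}, N * (r+1) - 1 ≤ k := by
    rintro k ⟨S, hScard, hSsim⟩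
    obtain ⟨G₀, hG₀⟩ := h𝒢ne
    have hKP : corona G₀ Pn ∈ coronaFam 𝒢 (ℋ₁ ∪ ℋ₂) := ⟨G₀, hG₀, Pn, Or.inl hP, rfl⟩
    have hKC : corona G₀ Cn ∈ coronaFam 𝒢 (ℋ₁ ∪ ℋ₂) := ⟨G₀, hG₀, Cn, Or.inr hC, rfl⟩
    have hgenKP := hSsim _ hKP
    have hgenKC := hSsim _ hKC
    have Si : V → Set (Fin n) := fun i => {b | Sum.inr (i, b) ∈ S}
    -- extraction of generators in each copy
    have extract : ∀ (Hg : SimpleGraph (Fin n)), IsAdjGen (corona G₀ Hg) S →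
        ∀ i : V, IsAdjGen Hg {b | Sum.inr (i, b) ∈ S} := by
      intro Hg hgen i x y hx hy hne
      have hne' : (Sum.inr (i,x) : V ⊕ V × Fin n) ≠ Sum.inr (i,y) := by
        intro hcc
        apply hne
        have h1 := Sum.inr.inj hcc
        exact congrArg Prod.snd h1
      obtain ⟨s, hs, hxor⟩ := hgen _ _ hx hy hne'
      match s with
      | Sum.inl kk =>
        exfalso
        rw [corona_adj_inl_inr, corona_adj_inl_inr] at hxor
        rcases hxor with ⟨h1, h2⟩ | ⟨h1, h2⟩ <;> exact h2 h1
      | Sum.inr (kk, b) =>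
        rw [corona_adj_inr_inr, corona_adj_inr_inr] at hxor
        by_cases hk : kk = i
        · subst hk
          refine ⟨b, hs, ?_⟩
          rcases hxor with ⟨⟨-, h1⟩, h2⟩ | ⟨⟨-, h1⟩, h2⟩
          · exact Or.inl ⟨h1, fun hcc => h2 ⟨rfl, hcc⟩⟩
          · exact Or.inr ⟨h1, fun hcc => h2 ⟨rfl, hcc⟩⟩
        · exfalso
          rcases hxor with ⟨⟨h1, -⟩, -⟩ | ⟨⟨h1, -⟩, -⟩ <;> exact hk h1
    have hSicard : ∀ i : V, r ≤ ({b | Sum.inr (i, b) ∈ S} : Set (Fin n)).ncard := by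
      intro i
      rw [← hSdAr]
      apply Nat.sInf_le
      refine ⟨{b | Sum.inr (i, b) ∈ S}, rfl, ?_⟩
      intro Hh hHm
      rcases hHm with rfl | hHm
      · exact extract Hh hgenKP i
      · rw [Set.mem_singleton_iff] at hHm
        subst hHm
        exact extract Hh hgenKC i
    -- cheap copies admit an undominated vertex
    have hcheapw : ∀ i : V, ({b | Sum.inr (i, b) ∈ S} : Set (Fin n)).ncard ≤ r →
        ∃ w, w ∉ ({b | Sum.inr (i, b) ∈ S} : Set (Fin n)) ∧
          ∀ b ∈ ({b | Sum.inr (i, b) ∈ S} : Set (Fin n)), ¬ Pn.Adj b w := by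
      intro i hle
      by_contra hcon
      push_neg at hcon
      set Fi := ({b | Sum.inr (i, b) ∈ S} : Set (Fin n)).toFinite.toFinset with hFi
      have hFimem : ∀ b, b ∈ Fi ↔ b ∈ ({b | Sum.inr (i, b) ∈ S} : Set (Fin n)) :=
        fun b => Set.Finite.mem_toFinset _
      have hgenF : ∀ x y : Fin n, x ∉ Fi → y ∉ Fi → x ≠ y →
          ∃ s ∈ Fi, Xor' (Cn.Adj s x) (Cn.Adj s y) := by
        intro x y hx hy hne
        obtain ⟨s, hsm, hxor⟩ := extract Cn hgenKC i x y
          (fun hcc => hx ((hFimem x).mpr hcc)) (fun hcc => hy ((hFimem y).mpr hcc)) hne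
        exact ⟨s, (hFimem s).mpr hsm, hxor⟩
      have hdomF : ∀ v : Fin n, v ∉ Fi → ∃ s ∈ Fi, Cn.Adj s v := by
        intro v hv
        obtain ⟨b, hb, hadj⟩ := hcon v (fun hcc => hv ((hFimem v).mpr hcc))
        exact ⟨b, (hFimem b).mpr hb, hPC _ _ hadj⟩
      have hbound := cycle_gen_dom_bound (n := n) (by omega) Cn hCadj Fi hgenF hdomF
      have hFicard : Fi.card = ({b | Sum.inr (i, b) ∈ S} : Set (Fin n)).ncard :=
        (Set.ncard_eq_toFinset_card _ _).symm
      omega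
    -- at most one cheap copy
    have huniq : ∀ i j : V, i ≠ j →
        ¬((Sum.inl i ∉ S ∧ ({b | Sum.inr (i, b) ∈ S} : Set (Fin n)).ncard ≤ r) ∧
          (Sum.inl j ∉ S ∧ ({b | Sum.inr (j, b) ∈ S} : Set (Fin n)).ncard ≤ r)) := by
      rintro i j hij ⟨⟨hi1, hi2⟩, ⟨hj1, hj2⟩⟩
      obtain ⟨wi, hwi, hwi2⟩ := hcheapw i hi2
      obtain ⟨wj, hwj, hwj2⟩ := hcheapw j hj2
      have hne : (Sum.inr (i, wi) : V ⊕ V × Fin n) ≠ Sum.inr (j, wj) := by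
        intro hcc
        exact hij (congrArg Prod.fst (Sum.inr.inj hcc))
      obtain ⟨s, hs, hxor⟩ := hgenKP _ _ hwi hwj hne
      match s with
      | Sum.inl kk =>
        have h1 : ¬ (corona G₀ Pn).Adj (Sum.inl kk) (Sum.inr (i, wi)) := by
          rw [corona_adj_inl_inr]
          intro hcc
          have hk : kk = i := hcc
          rw [hk] at hs
          exact hi1 hs
        have h2 : ¬ (corona G₀ Pn).Adj (Sum.inl kk) (Sum.inr (j, wj)) := by
          rw [corona_adj_inl_inr]
          intro hcc
          have hk : kk = j := hcc
          rw [hk] at hs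
          exact hj1 hs
        rcases hxor with ⟨hA, -⟩ | ⟨hA, -⟩
        · exact h1 hA
        · exact h2 hA
      | Sum.inr (kk, b) =>
        have h1 : ¬ (corona G₀ Pn).Adj (Sum.inr (kk, b)) (Sum.inr (i, wi)) := by
          rw [corona_adj_inr_inr]
          rintro ⟨hk, hadj⟩
          subst hk
          exact hwi2 b hs hadj
        have h2 : ¬ (corona G₀ Pn).Adj (Sum.inr (kk, b)) (Sum.inr (j, wj)) := by
          rw [corona_adj_inr_inr]
          rintro ⟨hk, hadj⟩
          subst hk
          exact hwj2 b hs hadj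
        rcases hxor with ⟨hA, -⟩ | ⟨hA, -⟩
        · exact h1 hA
        · exact h2 hA
    -- fiberwise counting
    set Fs := S.toFinite.toFinset with hFs
    have hFsmem : ∀ z, z ∈ Fs ↔ z ∈ S := fun z => Set.Finite.mem_toFinset _
    have hFscard : Fs.card = k := by
      rw [← hScard]
      exact (Set.ncard_eq_toFinset_card _ _).symm
    have hsum : Fs.card = ∑ i : V, (Fs.filter (fun a => Sum.elim id Prod.fst a = i)).card :=
      Finset.card_eq_sum_card_fiberwise (fun x _ => Finset.mem_univ _)
    have hfib : ∀ i : V, ({b | Sum.inr (i, b) ∈ S} : Set (Fin n)).ncard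
        + (if Sum.inl i ∈ S then 1 else 0)
        ≤ (Fs.filter (fun a => Sum.elim id Prod.fst a = i)).card := by
      intro i
      set Fi := ({b | Sum.inr (i, b) ∈ S} : Set (Fin n)).toFinite.toFinset with hFi
      have hFicard : Fi.card = ({b | Sum.inr (i, b) ∈ S} : Set (Fin n)).ncard :=
        (Set.ncard_eq_toFinset_card _ _).symm
      have hFim : ∀ b : Fin n, b ∈ Fi ↔ Sum.inr (i, b) ∈ S :=
        fun b => Set.Finite.mem_toFinset _
      have hinj : Function.Injective (fun b : Fin n => (Sum.inr (i, b) : V ⊕ V × Fin n)) := by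
        intro a b hab
        exact congrArg Prod.snd (Sum.inr.inj hab)
      have himg : (Fi.image (fun b => (Sum.inr (i, b) : V ⊕ V × Fin n)))
          ⊆ Fs.filter (fun a => Sum.elim id Prod.fst a = i) := by
        intro z hz
        rw [Finset.mem_image] at hz
        obtain ⟨b, hb, rfl⟩ := hz
        rw [Finset.mem_filter]
        exact ⟨(hFsmem _).mpr ((hFim b).mp hb), rfl⟩
      by_cases hinl : Sum.inl i ∈ S
      · rw [if_pos hinl]
        have hins : insert (Sum.inl i) (Fi.image (fun b => (Sum.inr (i,b) : V ⊕ V × Fin n)))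
            ⊆ Fs.filter (fun a => Sum.elim id Prod.fst a = i) := by
          intro z hz
          rcases Finset.mem_insert.mp hz with rfl | hz
          · rw [Finset.mem_filter]
            exact ⟨(hFsmem _).mpr hinl, rfl⟩
          · exact himg hz
        have hcins := Finset.card_le_card hins
        rw [Finset.card_insert_of_notMem (by
          rw [Finset.mem_image]
          rintro ⟨b, -, hcc⟩
          exact absurd hcc (by simp)), Finset.card_image_of_injective _ hinj, hFicard] at hcins
        omega
      · rw [if_neg hinl]
        have hcle := Finset.card_le_card himg
        rw [Finset.card_image_of_injective _ hinj, hFicard] at hcle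
        omega
    have hfib_ge : ∀ i : V,
        ¬(Sum.inl i ∉ S ∧ ({b | Sum.inr (i, b) ∈ S} : Set (Fin n)).ncard ≤ r) →
        r + 1 ≤ (Fs.filter (fun a => Sum.elim id Prod.fst a = i)).card := by
      intro i hnb
      have h1 := hfib i
      have h2 := hSicard i
      by_cases hinl : Sum.inl i ∈ S
      · rw [if_pos hinl] at h1
        omega
      · have h3 : ¬ ({b | Sum.inr (i, b) ∈ S} : Set (Fin n)).ncard ≤ r :=
          fun hcc => hnb ⟨hinl, hcc⟩
        rw [if_neg hinl] at h1
        omega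
    have hfib_r : ∀ i : V, r ≤ (Fs.filter (fun a => Sum.elim id Prod.fst a = i)).card := by
      intro i
      have h1 := hfib i
      have h2 := hSicard i
      split_ifs at h1 <;> omega
    by_cases hex : ∃ i : V, Sum.inl i ∉ S ∧ ({b | Sum.inr (i, b) ∈ S} : Set (Fin n)).ncard ≤ r
    · obtain ⟨i₁, hbad⟩ := hex
      have hrest : ∀ i ∈ Finset.univ.erase i₁,
          r + 1 ≤ (Fs.filter (fun a => Sum.elim id Prod.fst a = i)).card := by
        intro i hi
        exact hfib_ge i (fun hb => huniq i i₁ (Finset.ne_of_mem_erase hi) ⟨hb, hbad⟩)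
      have hsumlow := Finset.card_nsmul_le_sum (Finset.univ.erase i₁)
        (fun i => (Fs.filter (fun a => Sum.elim id Prod.fst a = i)).card) (r+1) hrest
      rw [Finset.card_erase_of_mem (Finset.mem_univ i₁), Finset.card_univ, smul_eq_mul] at hsumlow
      have hsplit := Finset.sum_erase_add Finset.univ
        (fun i => (Fs.filter (fun a => Sum.elim id Prod.fst a = i)).card) (Finset.mem_univ i₁)
      have hbadge := hfib_r i₁
      try simp only at hsplit
      try simp only at hsumlow
      have hexp : N * (r+1) = (N - 1) * (r+1) + (r+1) := by
        have hNe : N = (N - 1) + 1 := by omega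
        calc N * (r+1) = ((N-1)+1) * (r+1) := by rw [← hNe]
          _ = (N-1)*(r+1) + (r+1) := by ring
      have hcardeq : Fintype.card V = N := hN.symm
      rw [hcardeq] at hsumlow
      omega
    · push_neg at hex
      have hall : ∀ i ∈ Finset.univ,
          r + 1 ≤ (Fs.filter (fun a => Sum.elim id Prod.fst a = i)).card := by
        intro i hi
        refine hfib_ge i ?_
        rintro ⟨h1, h2⟩
        exact absurd h2 (by simpa using hex i h1)
      have hsumlow := Finset.card_nsmul_le_sum Finset.univ
        (fun i => (Fs.filter (fun a => Sum.elim id Prod.fst a = i)).card) (r+1) hall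
      rw [Finset.card_univ, smul_eq_mul] at hsumlow
      try simp only at hsumlow
      have hcardeq : Fintype.card V = N := hN.symm
      rw [hcardeq] at hsumlow
      omega
  obtain ⟨Sstar, hSc, hSsim⟩ := hub
  exact le_antisymm (Nat.sInf_le ⟨Sstar, hSc, hSsim⟩)
    (le_csInf ⟨N * (r+1) - 1, Sstar, hSc, hSsim⟩ hlb)
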